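/- Let n ≥ 1, let M : ℂ → ℂ^{n×n} be differentiable at μ ∈ ℂ, set T := M(μ) and D := M'(μ), let c, x ∈ ℂⁿ, and let Δμ ∈ ℂ. If x₊ ∈ ℂⁿ satisfies the QN4 correction equations T·(x₊ − x) + Δμ·D·x₊ = −T·x and c^H(x₊ − x) = 1 − c^H x, then T·x₊ + Δμ·D·x₊ = 0 and c^H x₊ = 1; that is, (Δμ, x₊) solves the generalized linear eigenvalue problem M(μ)y + θ·M'(μ)y = 0 with normalization c^H y = 1. (Hence the quasi-Newton method QN4 is equivalent to Ruhe's method of successive linear problems.) -/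
import Mathlib

open Matrix

/-- QN4 is the method of successive linear problems: with `T = M μ` and
`D = M'(μ)` (entrywise complex derivative), if `x₊` satisfies the QN4 correction equations
`T (x₊ − x) + Δμ D x₊ = −T x` and `cᴴ(x₊ − x) = 1 − cᴴ x`, then
`T x₊ + Δμ D x₊ = 0` and `cᴴ x₊ = 1`. -/
theorem qn4_is_mslp (n : ℕ) (hn : 1 ≤ n)
    (M : ℂ → Matrix (Fin n) (Fin n) ℂ) (μ : ℂ)
    (T D : Matrix (Fin n) (Fin n) ℂ) (hT : T = M μ)
    (hD : ∀ i j, HasDerivAt (fun t : ℂ => M t i j) (D i j) μ)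
    (c x xp : Fin n → ℂ) (Δμ : ℂ)
    (h1 : T *ᵥ (xp - x) + Δμ • (D *ᵥ xp) = -(T *ᵥ x))
    (h2 : star c ⬝ᵥ (xp - x) = 1 - star c ⬝ᵥ x) :
    T *ᵥ xp + Δμ • (D *ᵥ xp) = 0 ∧ star c ⬝ᵥ xp = 1 := by
  constructor
  · rw [Matrix.mulVec_sub] at h1
    have := h1
    abel_nf at this ⊢
    linear_combination (norm := abel) this
  · rw [dotProduct_sub] at h2
    linear_combination h2
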